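/- For every P1-feasible point ((P^{(k)})_k, (Γ_y)_{y=0}^{C}) with threshold ζ there exists a P1-feasible point ((P̃^{(k)})_k, (Γ̃_y)_{y=0}^{C}) with the same threshold ζ and the same communication cost Ω, such that every P̃^{(k)} is supported on the non-chunk-based placement set F̃ = {z ∈ F : z i ∈ {0, C} for all i} (i.e., P̃^{(k)} z = 0 whenever some z i ∉ {0, C}). Hence restricting the feasible placement set in the optimization P1 from F to F̃ does not change the optimal communication cost. -/

import Mathlib

/-- The set of feasible chunk placements:
`F = {z : Fin N → ℕ | (∀ i, z i ≤ C) ∧ ∑ i, z i = M·C}`, encoded with values in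
`Fin (C+1)` (so the bound `z i ≤ C` is automatic). -/
def Feas (N C M : ℕ) : Finset (Fin N → Fin (C + 1)) :=
  Finset.univ.filter fun z => ∑ i, (z i : ℕ) = M * C

/-- `qprob P i x = ∑_{z ∈ F, z i = x} P z`, the probability of caching exactly
`x` chunks of file `i` under the cache placement distribution `P`. -/
def qprob (N C M : ℕ) (P : (Fin N → Fin (C + 1)) → ℝ) (i : Fin N) (x : ℕ) : ℝ :=
  ∑ z ∈ (Feas N C M).filter (fun z => (z i : ℕ) = x), P z

/-- `P` is a pmf on the feasible placement set `F`. -/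
def IsPmfOnFeas (N C M : ℕ) (P : (Fin N → Fin (C + 1)) → ℝ) : Prop :=
  (∀ z ∈ Feas N C M, 0 ≤ P z) ∧ ∑ z ∈ Feas N C M, P z = 1

/-- The communication cost
`Ω = (1/C) ∑_k ∑_i ∑_{y=0}^{C} pg_k · p_i · y · q^{(k)}_{i, C−y}`. -/
noncomputable def commCost (N K C M : ℕ) (p : Fin N → ℝ) (pg : Fin K → ℝ)
    (P : Fin K → (Fin N → Fin (C + 1)) → ℝ) : ℝ :=
  (1 / (C : ℝ)) * ∑ k : Fin K, ∑ i : Fin N, ∑ y ∈ Finset.range (C + 1),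
    pg k * p i * (y : ℝ) * qprob N C M (P k) i (C - y)

/-- P1-feasibility: each `P^{(k)}` is a pmf on `F`,
`Γ_y ≥ p_i · pg_k · q^{(k)}_{i,C−y}` for all `k, i, y ∈ {0,…,C}`, and
`1 − ∑_{y=0}^{C} Γ_y ≥ ζ`. -/
def P1Feasible (N K C M : ℕ) (p : Fin N → ℝ) (pg : Fin K → ℝ) (ζ : ℝ)
    (P : Fin K → (Fin N → Fin (C + 1)) → ℝ) (Γ : ℕ → ℝ) : Prop :=
  (∀ k, IsPmfOnFeas N C M (P k)) ∧
  (∀ (k : Fin K) (i : Fin N), ∀ y ∈ Finset.range (C + 1),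
    Γ y ≥ p i * pg k * qprob N C M (P k) i (C - y)) ∧
  1 - ∑ y ∈ Finset.range (C + 1), Γ y ≥ ζ

/-- P2-feasibility: `0 ≤ α^{(k)}_i ≤ 1`, `∑_i α^{(k)}_i = M` for every `k`,
`γ_0 ≥ pg_k · p_i · α^{(k)}_i`, `γ_1 ≥ pg_k · p_i · (1 − α^{(k)}_i)`, and
`1 − γ_0 − γ_1 ≥ ζ`. -/
def P2Feasible (N K M : ℕ) (p : Fin N → ℝ) (pg : Fin K → ℝ) (ζ : ℝ)
    (α : Fin K → Fin N → ℝ) (γ0 γ1 : ℝ) : Prop :=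
  (∀ k i, 0 ≤ α k i ∧ α k i ≤ 1) ∧
  (∀ k, ∑ i, α k i = (M : ℝ)) ∧
  (∀ k i, γ0 ≥ pg k * p i * α k i) ∧
  (∀ k i, γ1 ≥ pg k * p i * (1 - α k i)) ∧
  1 - γ0 - γ1 ≥ ζ

lemma rounding (N C M : ℕ) (hC : 1 ≤ C) :
    ∀ (d : ℕ) (α : Fin N → ℝ),
      (Finset.univ.filter fun i => α i ≠ 0 ∧ α i ≠ 1).card = d →
      (∀ i, 0 ≤ α i ∧ α i ≤ 1) → (∑ i, α i) = (M : ℝ) →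
      ∃ Q : (Fin N → Fin (C + 1)) → ℝ,
        (∀ z, 0 ≤ Q z) ∧ (∑ z, Q z = 1) ∧
        (∀ z, (¬ ∀ i, (z i : ℕ) = 0 ∨ (z i : ℕ) = C) → Q z = 0) ∧
        (∀ z, (∑ i, (z i : ℕ)) ≠ M * C → Q z = 0) ∧
        (∀ i, ∑ z ∈ Finset.univ.filter (fun z => (z i : ℕ) = C), Q z = α i) := by
  intro d
  induction d using Nat.strong_induction_on with
  | _ d ih =>
  intro α hd hb hs
  by_cases hne : (Finset.univ.filter fun i => α i ≠ 0 ∧ α i ≠ 1).Nonempty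
  · -- inductive step
    obtain ⟨i, hi⟩ := hne
    simp only [Finset.mem_filter, Finset.mem_univ, true_and] at hi
    have hi0 : 0 < α i := lt_of_le_of_ne (hb i).1 (Ne.symm hi.1)
    have hi1 : α i < 1 := lt_of_le_of_ne (hb i).2 hi.2
    -- find another fractional coordinate j
    have hj : ∃ j, j ≠ i ∧ α j ≠ 0 ∧ α j ≠ 1 := by
      by_contra hcon
      push_neg at hcon
      -- all other coordinates are 0 or 1
      have h01 : ∀ j ∈ Finset.univ.erase i, α j = 0 ∨ α j = 1 := by
        intro j hj'
        have hji : j ≠ i := (Finset.mem_erase.mp hj').1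
        by_cases h0 : α j = 0
        · exact Or.inl h0
        · exact Or.inr (hcon j hji h0)
      set T := (Finset.univ.erase i).filter (fun j => α j = 1) with hT
      have hsum : ∑ j ∈ Finset.univ.erase i, α j = (T.card : ℝ) := by
        rw [hT]
        rw [← Finset.sum_filter_add_sum_filter_not (Finset.univ.erase i) (fun j => α j = 1) α]
        have h1 : ∑ j ∈ (Finset.univ.erase i).filter (fun j => α j = 1), α j
            = ((Finset.univ.erase i).filter (fun j => α j = 1)).card • (1:ℝ) := by
          apply Finset.sum_eq_card_nsmul
          intro a ha
          exact (Finset.mem_filter.mp ha).2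
        have h2 : ∑ j ∈ (Finset.univ.erase i).filter (fun j => ¬ α j = 1), α j = 0 := by
          apply Finset.sum_eq_zero
          intro a ha
          rcases h01 a (Finset.mem_filter.mp ha).1 with h | h
          · exact h
          · exact absurd h (Finset.mem_filter.mp ha).2
        rw [h1, h2]
        simp
      have htot : α i + (T.card : ℝ) = (M : ℝ) := by
        rw [← hsum, Finset.add_sum_erase _ _ (Finset.mem_univ i)]
        exact hs
      have h1 : (T.card : ℝ) < (M : ℝ) := by linarith
      have h2 : (M : ℝ) < (T.card : ℝ) + 1 := by linarith
      have h1' : T.card < M := by exact_mod_cast h1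
      have h2' : M < T.card + 1 := by exact_mod_cast h2
      omega
    obtain ⟨j, hji, hj0, hj1⟩ := hj
    have hj0' : 0 < α j := lt_of_le_of_ne (hb j).1 (Ne.symm hj0)
    have hj1' : α j < 1 := lt_of_le_of_ne (hb j).2 hj1
    set d1 := min (1 - α i) (α j) with hd1
    set d2 := min (α i) (1 - α j) with hd2
    have hd1pos : 0 < d1 := lt_min (by linarith) hj0'
    have hd2pos : 0 < d2 := lt_min hi0 (by linarith)
    set β₁ : Fin N → ℝ := fun l => if l = i then α i + d1 else if l = j then α j - d1 else α l with hβ₁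
    set β₂ : Fin N → ℝ := fun l => if l = i then α i - d2 else if l = j then α j + d2 else α l with hβ₂
    have hd1a : d1 ≤ 1 - α i := min_le_left _ _
    have hd1b : d1 ≤ α j := min_le_right _ _
    have hd2a : d2 ≤ α i := min_le_left _ _
    have hd2b : d2 ≤ 1 - α j := min_le_right _ _
    have hb1 : ∀ l, 0 ≤ β₁ l ∧ β₁ l ≤ 1 := by
      intro l
      simp only [hβ₁]
      split_ifs with h h
      · constructor <;> [linarith; linarith]
      · constructor <;> [linarith; linarith]
      · exact hb l
    have hb2 : ∀ l, 0 ≤ β₂ l ∧ β₂ l ≤ 1 := by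
      intro l
      simp only [hβ₂]
      split_ifs with h h
      · constructor <;> [linarith; linarith]
      · constructor <;> [linarith; linarith]
      · exact hb l
    -- sums
    have hsum_shift : ∀ (t : ℝ),
        ∑ l, (if l = i then α i + t else if l = j then α j - t else α l) = (M : ℝ) := by
      intro t
      have hpt : ∀ l, (if l = i then α i + t else if l = j then α j - t else α l)
          = α l + (if l = i then t else 0) - (if l = j then t else 0) := by
        intro l
        by_cases h1 : l = i
        · rw [if_pos h1, if_pos h1, if_neg (by rw [h1]; exact Ne.symm hji), h1]
          ring
        · by_cases h2 : l = j
          · rw [if_neg h1, if_pos h2, if_neg h1, if_pos h2, h2]; ring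
          · rw [if_neg h1, if_neg h2, if_neg h1, if_neg h2]; ring
      rw [Finset.sum_congr rfl (fun l _ => hpt l)]
      rw [Finset.sum_sub_distrib, Finset.sum_add_distrib]
      simp [Finset.sum_ite_eq', hs]
    have hs1 : ∑ l, β₁ l = (M : ℝ) := hsum_shift d1
    have hs2 : ∑ l, β₂ l = (M : ℝ) := by
      have := hsum_shift (-d2)
      simp only [← sub_eq_add_neg, sub_neg_eq_add] at this
      exact this
    -- fractional sets shrink
    have hsubset : ∀ (β : Fin N → ℝ), (∀ l, l ≠ i → l ≠ j → β l = α l) →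
        (Finset.univ.filter fun l => β l ≠ 0 ∧ β l ≠ 1) ⊆
        (Finset.univ.filter fun l => α l ≠ 0 ∧ α l ≠ 1) := by
      intro β hβ l hl
      simp only [Finset.mem_filter, Finset.mem_univ, true_and] at hl ⊢
      by_cases h1 : l = i
      · subst h1; exact hi
      · by_cases h2 : l = j
        · subst h2; exact ⟨hj0, hj1⟩
        · rw [← hβ l h1 h2]; exact hl
    have hsub1 := hsubset β₁ (by intro l h1 h2; simp [hβ₁, h1, h2])
    have hsub2 := hsubset β₂ (by intro l h1 h2; simp [hβ₂, h1, h2])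
    have hcard1 : (Finset.univ.filter fun l => β₁ l ≠ 0 ∧ β₁ l ≠ 1).card < d := by
      rw [← hd]
      apply Finset.card_lt_card
      rw [Finset.ssubset_iff_of_subset hsub1]
      rcases min_cases (1 - α i) (α j) with ⟨hm, _⟩ | ⟨hm, _⟩
      · exact ⟨i, by simp [hi], by simp [hβ₁, hd1, hm]⟩
      · refine ⟨j, by simp [hj0, hj1], ?_⟩
        simp only [Finset.mem_filter, Finset.mem_univ, true_and, not_and, not_not]
        intro h
        exfalso
        apply h
        simp [hβ₁, hji, hd1, hm]
    have hcard2 : (Finset.univ.filter fun l => β₂ l ≠ 0 ∧ β₂ l ≠ 1).card < d := by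
      rw [← hd]
      apply Finset.card_lt_card
      rw [Finset.ssubset_iff_of_subset hsub2]
      rcases min_cases (α i) (1 - α j) with ⟨hm, _⟩ | ⟨hm, _⟩
      · exact ⟨i, by simp [hi], by simp [hβ₂, hd2, hm]⟩
      · refine ⟨j, by simp [hj0, hj1], ?_⟩
        simp only [Finset.mem_filter, Finset.mem_univ, true_and, not_and, not_not]
        intro _
        rw [show β₂ j = α j + d2 from by simp [hβ₂, hji], hd2, hm]
        ring
    obtain ⟨Q₁, hQ₁0, hQ₁1, hQ₁s, hQ₁f, hQ₁m⟩ := ih _ hcard1 β₁ rfl hb1 hs1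
    obtain ⟨Q₂, hQ₂0, hQ₂1, hQ₂s, hQ₂f, hQ₂m⟩ := ih _ hcard2 β₂ rfl hb2 hs2
    set lam := d2 / (d1 + d2) with hlam
    have hdd : 0 < d1 + d2 := by linarith
    have hlam0 : 0 ≤ lam := div_nonneg (le_of_lt hd2pos) (le_of_lt hdd)
    have hlam1 : lam ≤ 1 := by
      rw [hlam, div_le_one hdd]; linarith
    refine ⟨fun z => lam * Q₁ z + (1 - lam) * Q₂ z, ?_, ?_, ?_, ?_, ?_⟩
    · intro z
      exact add_nonneg (mul_nonneg hlam0 (hQ₁0 z)) (mul_nonneg (by linarith) (hQ₂0 z))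
    · dsimp only
      rw [Finset.sum_add_distrib, ← Finset.mul_sum, ← Finset.mul_sum, hQ₁1, hQ₂1]; ring
    · intro z hz; dsimp only; rw [hQ₁s z hz, hQ₂s z hz]; ring
    · intro z hz; dsimp only; rw [hQ₁f z hz, hQ₂f z hz]; ring
    · intro l
      dsimp only
      rw [Finset.sum_add_distrib, ← Finset.mul_sum, ← Finset.mul_sum, hQ₁m, hQ₂m]
      by_cases h1 : l = i
      · subst h1
        simp only [hβ₁, hβ₂, if_pos rfl]
        rw [hlam]
        have hne' : d1 + d2 ≠ 0 := ne_of_gt hdd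
        field_simp
        ring
      · by_cases h2 : l = j
        · subst h2
          simp only [hβ₁, hβ₂, if_neg h1, if_pos rfl, ↓reduceIte]
          rw [hlam]
          have hne' : d1 + d2 ≠ 0 := ne_of_gt hdd
          field_simp
          ring
        · simp only [hβ₁, hβ₂, if_neg h1, if_neg h2]
          ring
  · -- base case: all coordinates are 0 or 1
    have h01 : ∀ l, α l = 0 ∨ α l = 1 := by
      intro l
      by_contra h
      push_neg at h
      exact hne ⟨l, by simp [h.1, h.2]⟩
    set S := Finset.univ.filter (fun l => α l = 1) with hS
    have hcard : (S.card : ℝ) = (M : ℝ) := by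
      have heq : ∑ l, α l = ∑ l, (if α l = 1 then (1:ℝ) else 0) :=
        Finset.sum_congr rfl (fun l _ => by rcases h01 l with h | h <;> simp [h])
      rw [heq, Finset.sum_boole] at hs
      exact_mod_cast hs
    have hScard : S.card = M := by exact_mod_cast hcard
    set z₀ : Fin N → Fin (C + 1) := fun l => if α l = 1 then Fin.last C else 0 with hz₀
    have hz₀v : ∀ l, (z₀ l : ℕ) = if α l = 1 then C else 0 := by
      intro l; simp only [hz₀]; split_ifs <;> simp
    refine ⟨fun z => if z = z₀ then 1 else 0, ?_, ?_, ?_, ?_, ?_⟩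
    · intro z; dsimp only; split_ifs <;> norm_num
    · simp
    · intro z hz
      dsimp only
      rw [if_neg]
      intro h
      subst h
      apply hz
      intro l
      rw [hz₀v l]
      split_ifs <;> simp
    · intro z hz
      dsimp only
      rw [if_neg]
      intro h
      subst h
      apply hz
      calc ∑ l, (z₀ l : ℕ) = ∑ l, (if α l = 1 then C else 0) := by
            exact Finset.sum_congr rfl (fun l _ => hz₀v l)
        _ = ∑ _l ∈ S, C := (Finset.sum_filter _ _).symm
        _ = S.card * C := by rw [Finset.sum_const, smul_eq_mul]
        _ = M * C := by rw [hScard]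
    · intro l
      dsimp only
      rw [Finset.sum_ite_eq' (Finset.univ.filter (fun z => (z l : ℕ) = C)) z₀ (fun _ => 1)]
      by_cases h : α l = 1
      · rw [if_pos, h]
        simp [hz₀v l, h]
      · rw [if_neg, (h01 l).resolve_right h]
        simp only [Finset.mem_filter, Finset.mem_univ, true_and, hz₀v l, if_neg h]
        omega


lemma mem_Feas {N C M : ℕ} {z : Fin N → Fin (C+1)} :
    z ∈ Feas N C M ↔ ∑ i, (z i : ℕ) = M * C := by
  simp [Feas]

lemma fiber_sum (N C M : ℕ) (P : (Fin N → Fin (C+1)) → ℝ) (i : Fin N) (f : ℕ → ℝ) :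
    ∑ x ∈ Finset.range (C+1), f x * qprob N C M P i x
      = ∑ z ∈ Feas N C M, f ((z i : ℕ)) * P z := by
  unfold qprob
  rw [← Finset.sum_fiberwise_of_maps_to (g := fun z => ((z i : ℕ)))
      (fun z _ => Finset.mem_range.mpr (z i).isLt) (fun z => f ((z i : ℕ)) * P z)]
  apply Finset.sum_congr rfl
  intro x _
  rw [Finset.mul_sum]
  apply Finset.sum_congr rfl
  intro z hz
  rw [(Finset.mem_filter.mp hz).2]

lemma qprob_nonneg {N C M : ℕ} {P : (Fin N → Fin (C+1)) → ℝ}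
    (hP : IsPmfOnFeas N C M P) (i : Fin N) (x : ℕ) : 0 ≤ qprob N C M P i x :=
  Finset.sum_nonneg fun z hz => hP.1 z (Finset.mem_of_mem_filter _ hz)

lemma sum_qprob {N C M : ℕ} {P : (Fin N → Fin (C+1)) → ℝ}
    (hP : IsPmfOnFeas N C M P) (i : Fin N) :
    ∑ x ∈ Finset.range (C+1), qprob N C M P i x = 1 := by
  have h := fiber_sum N C M P i (fun _ => 1)
  simpa [hP.2] using h

noncomputable def alphaOf (N C M : ℕ) (P : (Fin N → Fin (C+1)) → ℝ) (i : Fin N) : ℝ :=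
  ∑ x ∈ Finset.range (C+1), ((x : ℝ)/C) * qprob N C M P i x

lemma alpha_nonneg {N C M : ℕ} {P : (Fin N → Fin (C+1)) → ℝ}
    (hP : IsPmfOnFeas N C M P) (i : Fin N) : 0 ≤ alphaOf N C M P i :=
  Finset.sum_nonneg fun x _ => mul_nonneg (by positivity) (qprob_nonneg hP i x)

lemma alpha_le_one {N C M : ℕ} (hC : 1 ≤ C) {P : (Fin N → Fin (C+1)) → ℝ}
    (hP : IsPmfOnFeas N C M P) (i : Fin N) : alphaOf N C M P i ≤ 1 := by
  have h1 : alphaOf N C M P i ≤ ∑ x ∈ Finset.range (C+1), qprob N C M P i x := by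
    apply Finset.sum_le_sum
    intro x hx
    have hxC : x ≤ C := Nat.lt_succ_iff.mp (Finset.mem_range.mp hx)
    have h2 : (x:ℝ)/C ≤ 1 := by
      rw [div_le_one (by exact_mod_cast Nat.pos_of_ne_zero (by omega))]
      exact_mod_cast hxC
    calc ((x:ℝ)/C) * qprob N C M P i x ≤ 1 * qprob N C M P i x :=
          mul_le_mul_of_nonneg_right h2 (qprob_nonneg hP i x)
      _ = qprob N C M P i x := one_mul _
  rw [sum_qprob hP i] at h1
  exact h1

lemma sum_alpha {N C M : ℕ} (hC : 1 ≤ C) {P : (Fin N → Fin (C+1)) → ℝ}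
    (hP : IsPmfOnFeas N C M P) : ∑ i, alphaOf N C M P i = (M : ℝ) := by
  have hC0 : (C:ℝ) ≠ 0 := Nat.cast_ne_zero.mpr (by omega)
  have h1 : ∀ i, alphaOf N C M P i = ∑ z ∈ Feas N C M, ((z i : ℕ) : ℝ)/C * P z :=
    fun i => fiber_sum N C M P i (fun x => (x:ℝ)/C)
  calc ∑ i, alphaOf N C M P i
      = ∑ i, ∑ z ∈ Feas N C M, ((z i : ℕ) : ℝ)/C * P z :=
        Finset.sum_congr rfl (fun i _ => h1 i)
    _ = ∑ z ∈ Feas N C M, ∑ i, ((z i : ℕ) : ℝ)/C * P z := Finset.sum_comm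
    _ = ∑ z ∈ Feas N C M, (M : ℝ) * P z := by
        apply Finset.sum_congr rfl
        intro z hz
        have hsum : ∑ i, (z i : ℕ) = M * C := mem_Feas.mp hz
        have : ∑ i, ((z i : ℕ) : ℝ)/C * P z = (∑ i, ((z i : ℕ) : ℝ)) / C * P z := by
          rw [Finset.sum_div, Finset.sum_mul]
        rw [this]
        have hcast : (∑ i, ((z i : ℕ) : ℝ)) = ((M : ℝ) * C) := by
          rw [← Nat.cast_sum, hsum]; push_cast; ring
        rw [hcast]
        field_simp
    _ = (M : ℝ) := by rw [← Finset.mul_sum, hP.2, mul_one]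

lemma cost_identity {N C M : ℕ} (hC : 1 ≤ C) {P : (Fin N → Fin (C+1)) → ℝ}
    (hP : IsPmfOnFeas N C M P) (i : Fin N) :
    ∑ y ∈ Finset.range (C+1), (y : ℝ) * qprob N C M P i (C - y)
      = (C : ℝ) - (C : ℝ) * alphaOf N C M P i := by
  have hC0 : (C:ℝ) ≠ 0 := Nat.cast_ne_zero.mpr (by omega)
  have hrefl := Finset.sum_range_reflect (fun y => (y:ℝ) * qprob N C M P i (C - y)) (C+1)
  rw [← hrefl]
  have hcongr : ∀ j ∈ Finset.range (C+1),
      ((C + 1 - 1 - j : ℕ) : ℝ) * qprob N C M P i (C - (C + 1 - 1 - j))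
        = ((C:ℝ) - j) * qprob N C M P i j := by
    intro j hj
    have hjC : j ≤ C := Nat.lt_succ_iff.mp (Finset.mem_range.mp hj)
    have h1 : C + 1 - 1 - j = C - j := by omega
    have h2 : C - (C - j) = j := Nat.sub_sub_self hjC
    rw [h1, h2, Nat.cast_sub hjC]
  rw [Finset.sum_congr rfl hcongr]
  have hsplit : ∑ j ∈ Finset.range (C+1), ((C:ℝ) - j) * qprob N C M P i j
      = (C:ℝ) * ∑ j ∈ Finset.range (C+1), qprob N C M P i j
        - ∑ j ∈ Finset.range (C+1), (j:ℝ) * qprob N C M P i j := by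
    rw [Finset.mul_sum, ← Finset.sum_sub_distrib]
    apply Finset.sum_congr rfl
    intro j _
    ring
  rw [hsplit, sum_qprob hP i, mul_one]
  congr 1
  unfold alphaOf
  rw [Finset.mul_sum]
  apply Finset.sum_congr rfl
  intro j _
  field_simp


/-- Corollary 1: every P1-feasible point can be replaced by a P1-feasible
point with the same threshold `ζ` and the same communication cost whose
policies are supported on the non-chunk-based placement set
`F̃ = {z ∈ F : z i ∈ {0, C} for all i}`; hence restricting `F` to `F̃` does not
change the optimal communication cost of P1. -/
theorem stmt5 (N K C M : ℕ) (hN : 1 ≤ N) (hK : 1 ≤ K) (hC : 1 ≤ C)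
    (hM : 1 ≤ M) (hMN : M ≤ N)
    (p : Fin N → ℝ) (hp0 : ∀ i, 0 ≤ p i) (hp1 : ∑ i, p i = 1)
    (pg : Fin K → ℝ) (hpg0 : ∀ k, 0 ≤ pg k) (hpg1 : ∑ k, pg k = 1)
    (ζ : ℝ) (P : Fin K → (Fin N → Fin (C + 1)) → ℝ) (Γ : ℕ → ℝ)
    (hfeas : P1Feasible N K C M p pg ζ P Γ) :
    ∃ (P' : Fin K → (Fin N → Fin (C + 1)) → ℝ) (Γ' : ℕ → ℝ),
      P1Feasible N K C M p pg ζ P' Γ' ∧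
      commCost N K C M p pg P' = commCost N K C M p pg P ∧
      ∀ (k : Fin K) (z : Fin N → Fin (C + 1)),
        (¬ ∀ i, (z i : ℕ) = 0 ∨ (z i : ℕ) = C) → P' k z = 0 := by
  obtain ⟨hpmf, hΓ, hζ⟩ := hfeas
  have hC0 : (C:ℝ) ≠ 0 := Nat.cast_ne_zero.mpr (by omega)
  -- rounded distributions
  have hex : ∀ k : Fin K, ∃ Q : (Fin N → Fin (C + 1)) → ℝ,
      (∀ z, 0 ≤ Q z) ∧ (∑ z, Q z = 1) ∧
      (∀ z, (¬ ∀ i, (z i : ℕ) = 0 ∨ (z i : ℕ) = C) → Q z = 0) ∧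
      (∀ z, (∑ i, (z i : ℕ)) ≠ M * C → Q z = 0) ∧
      (∀ i, ∑ z ∈ Finset.univ.filter (fun z => (z i : ℕ) = C), Q z = alphaOf N C M (P k) i) :=
    fun k => rounding N C M hC _ (fun i => alphaOf N C M (P k) i) rfl
      (fun i => ⟨alpha_nonneg (hpmf k) i, alpha_le_one hC (hpmf k) i⟩)
      (sum_alpha hC (hpmf k))
  choose Q hQ0 hQ1 hQs hQf hQm using hex
  -- Q k is a pmf on Feas
  have hQpmf : ∀ k, IsPmfOnFeas N C M (Q k) := by
    intro k
    refine ⟨fun z _ => hQ0 k z, ?_⟩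
    rw [Finset.sum_subset (Finset.subset_univ _) ?_]
    · exact hQ1 k
    · intro z _ hz
      exact hQf k z (fun h => hz (mem_Feas.mpr h))
  -- marginals of Q
  have hqC : ∀ k i, qprob N C M (Q k) i C = alphaOf N C M (P k) i := by
    intro k i
    rw [← hQm k i]
    unfold qprob
    apply Finset.sum_subset
    · intro z hz
      simp only [Finset.mem_filter, Finset.mem_univ, true_and]
      exact (Finset.mem_filter.mp hz).2
    · intro z hz hz'
      apply hQf k z
      intro h
      apply hz'
      refine Finset.mem_filter.mpr ⟨mem_Feas.mpr h, ?_⟩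
      exact (Finset.mem_filter.mp hz).2
  have hqmid : ∀ k i x, x ≠ 0 → x ≠ C → qprob N C M (Q k) i x = 0 := by
    intro k i x hx0 hxC
    apply Finset.sum_eq_zero
    intro z hz
    have hzx : (z i : ℕ) = x := (Finset.mem_filter.mp hz).2
    apply hQs k z
    intro h
    rcases h i with h' | h' <;> rw [hzx] at h' <;> [exact hx0 h'; exact hxC h']
  have hq0 : ∀ k i, qprob N C M (Q k) i 0 = 1 - alphaOf N C M (P k) i := by
    intro k i
    have hsum := sum_qprob (hQpmf k) i
    have hCne : (0:ℕ) ≠ C := by omega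
    have hsub : ({0, C} : Finset ℕ) ⊆ Finset.range (C+1) := by
      intro x hx
      rcases Finset.mem_insert.mp hx with h | h
      · subst h; exact Finset.mem_range.mpr (by omega)
      · rw [Finset.mem_singleton.mp h]; exact Finset.mem_range.mpr (by omega)
    rw [← Finset.sum_subset hsub ?_] at hsum
    · rw [Finset.sum_pair hCne, hqC k i] at hsum
      linarith
    · intro x _ hx
      have hx0 : x ≠ 0 := fun h => hx (by simp [h])
      have hxC : x ≠ C := fun h => hx (by simp [h])
      exact hqmid k i x hx0 hxC
  -- alphaOf of Q equals alphaOf of P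
  have hαQ : ∀ k i, alphaOf N C M (Q k) i = alphaOf N C M (P k) i := by
    intro k i
    have h1 : alphaOf N C M (Q k) i = ((C:ℝ)/C) * qprob N C M (Q k) i C := by
      unfold alphaOf
      apply Finset.sum_eq_single_of_mem C (Finset.self_mem_range_succ C)
      intro x _ hxC
      by_cases hx0 : x = 0
      · simp [hx0]
      · rw [hqmid k i x hx0 hxC, mul_zero]
    rw [h1, hqC k i, div_self hC0, one_mul]
  -- the new Γ
  set Γ' : ℕ → ℝ := fun y =>
    if y = 0 then ∑ x ∈ Finset.range (C+1), ((x:ℝ)/C) * Γ (C - x)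
    else if y = C then ∑ x ∈ Finset.range (C+1), (((C:ℝ) - x)/C) * Γ (C - x)
    else 0 with hΓ'
  -- Γ is nonneg on range
  have i0 : Fin N := ⟨0, hN⟩
  have k0 : Fin K := ⟨0, hK⟩
  have hΓnn : ∀ y ∈ Finset.range (C+1), 0 ≤ Γ y := by
    intro y hy
    refine le_trans ?_ (hΓ k0 i0 y hy)
    exact mul_nonneg (mul_nonneg (hp0 i0) (hpg0 k0)) (qprob_nonneg (hpmf k0) i0 _)
  -- Γ bound pieces
  have hΓb : ∀ (k : Fin K) (i : Fin N), ∀ x ∈ Finset.range (C+1),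
      p i * pg k * qprob N C M (P k) i x ≤ Γ (C - x) := by
    intro k i x hx
    have hxC : x ≤ C := Nat.lt_succ_iff.mp (Finset.mem_range.mp hx)
    have := hΓ k i (C - x) (Finset.mem_range.mpr (by omega))
    rwa [Nat.sub_sub_self hxC] at this
  have hG0 : ∀ (k : Fin K) (i : Fin N),
      p i * pg k * alphaOf N C M (P k) i ≤ ∑ x ∈ Finset.range (C+1), ((x:ℝ)/C) * Γ (C - x) := by
    intro k i
    have h1 : p i * pg k * alphaOf N C M (P k) i
        = ∑ x ∈ Finset.range (C+1), ((x:ℝ)/C) * (p i * pg k * qprob N C M (P k) i x) := by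
      unfold alphaOf
      rw [Finset.mul_sum]
      exact Finset.sum_congr rfl (fun x _ => by ring)
    rw [h1]
    apply Finset.sum_le_sum
    intro x hx
    exact mul_le_mul_of_nonneg_left (hΓb k i x hx) (by positivity)
  have hGC : ∀ (k : Fin K) (i : Fin N),
      p i * pg k * (1 - alphaOf N C M (P k) i)
        ≤ ∑ x ∈ Finset.range (C+1), (((C:ℝ) - x)/C) * Γ (C - x) := by
    intro k i
    have h1 : p i * pg k * (1 - alphaOf N C M (P k) i)
        = ∑ x ∈ Finset.range (C+1), (((C:ℝ) - x)/C) * (p i * pg k * qprob N C M (P k) i x) := by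
      have h2 : (1 : ℝ) - alphaOf N C M (P k) i
          = ∑ x ∈ Finset.range (C+1), (((C:ℝ) - x)/C) * qprob N C M (P k) i x := by
        unfold alphaOf
        rw [← sum_qprob (hpmf k) i, ← Finset.sum_sub_distrib]
        apply Finset.sum_congr rfl
        intro x _
        field_simp
      rw [h2, Finset.mul_sum]
      exact Finset.sum_congr rfl (fun x _ => by ring)
    rw [h1]
    apply Finset.sum_le_sum
    intro x hx
    have hxC : x ≤ C := Nat.lt_succ_iff.mp (Finset.mem_range.mp hx)
    have hcoef : (0:ℝ) ≤ ((C:ℝ) - x)/C := by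
      apply div_nonneg _ (Nat.cast_nonneg C)
      have : (x:ℝ) ≤ C := by exact_mod_cast hxC
      linarith
    exact mul_le_mul_of_nonneg_left (hΓb k i x hx) hcoef
  -- sum of Γ'
  have hΓ'sum : ∑ y ∈ Finset.range (C+1), Γ' y = ∑ y ∈ Finset.range (C+1), Γ y := by
    have hCne : (0:ℕ) ≠ C := by omega
    have hsub : ({0, C} : Finset ℕ) ⊆ Finset.range (C+1) := by
      intro x hx
      rcases Finset.mem_insert.mp hx with h | h
      · subst h; exact Finset.mem_range.mpr (by omega)
      · rw [Finset.mem_singleton.mp h]; exact Finset.mem_range.mpr (by omega)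
    rw [← Finset.sum_subset hsub ?_]
    · rw [Finset.sum_pair hCne]
      have hg0 : Γ' 0 = ∑ x ∈ Finset.range (C+1), ((x:ℝ)/C) * Γ (C - x) := by
        simp [hΓ']
      have hgC : Γ' C = ∑ x ∈ Finset.range (C+1), (((C:ℝ) - x)/C) * Γ (C - x) := by
        simp [hΓ', (show C ≠ 0 by omega)]
      rw [hg0, hgC, ← Finset.sum_add_distrib]
      have h3 : ∀ x ∈ Finset.range (C+1),
          ((x:ℝ)/C) * Γ (C - x) + (((C:ℝ) - x)/C) * Γ (C - x) = Γ (C - x) := by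
        intro x _
        field_simp
        ring
      rw [Finset.sum_congr rfl h3]
      have hrefl := Finset.sum_range_reflect (fun x => Γ x) (C+1)
      rw [← hrefl]
      apply Finset.sum_congr rfl
      intro x hx
      congr 1
    · intro y hy hy'
      have hy0 : y ≠ 0 := fun h => hy' (by simp [h])
      have hyC : y ≠ C := fun h => hy' (by simp [h])
      simp [hΓ', hy0, hyC]
  refine ⟨Q, Γ', ⟨hQpmf, ?_, ?_⟩, ?_, fun k z hz => hQs k z hz⟩
  · -- privacy constraints
    intro k i y hy
    have hyC : y ≤ C := Nat.lt_succ_iff.mp (Finset.mem_range.mp hy)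
    by_cases hy0 : y = 0
    · subst hy0
      have hval : Γ' 0 = ∑ x ∈ Finset.range (C+1), ((x:ℝ)/C) * Γ (C - x) := by simp [hΓ']
      rw [hval]
      simp only [Nat.sub_zero]
      rw [hqC k i]
      exact hG0 k i
    · by_cases hyCeq : y = C
      · have hval : Γ' C = ∑ x ∈ Finset.range (C+1), (((C:ℝ) - x)/C) * Γ (C - x) := by
          simp [hΓ', (show C ≠ 0 by omega)]
        rw [hyCeq, hval, Nat.sub_self, hq0 k i]
        exact hGC k i
      · have hΓ'y : Γ' y = 0 := by simp [hΓ', hy0, hyCeq]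
        have hq : qprob N C M (Q k) i (C - y) = 0 :=
          hqmid k i (C - y) (by omega) (by omega)
        rw [hΓ'y, hq, mul_zero]
  · -- threshold
    rw [hΓ'sum]
    exact hζ
  · -- cost equality
    unfold commCost
    congr 1
    apply Finset.sum_congr rfl
    intro k _
    apply Finset.sum_congr rfl
    intro i _
    have hfac : ∀ (R : Fin K → (Fin N → Fin (C+1)) → ℝ),
        ∑ y ∈ Finset.range (C+1), pg k * p i * (y:ℝ) * qprob N C M (R k) i (C - y)
          = pg k * p i * ∑ y ∈ Finset.range (C+1), (y:ℝ) * qprob N C M (R k) i (C - y) := by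
      intro R
      rw [Finset.mul_sum]
      exact Finset.sum_congr rfl (fun y _ => by ring)
    rw [hfac Q, hfac P, cost_identity hC (hQpmf k) i, cost_identity hC (hpmf k) i, hαQ k i]
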